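/- Let G be a finite simple graph with surplus(G) ≥ 1, and let Z be a nonempty independent set of G with |N(Z)| = |Z| + 1 such that N(Z) is also an independent set of G. Let G' be the struction graph obtained from G and Z. Then MM(G') ≤ MM(G) − |Z|. -/

import Mathlib

open scoped Classical

/-- A fractional vertex cover of `G`. -/
def IsFVC {V : Type} (G : SimpleGraph V) (x : V → ℝ) : Prop :=
  (∀ v, 0 ≤ x v ∧ x v ≤ 1) ∧ ∀ ⦃u v⦄, G.Adj u v → 1 ≤ x u + x v

/-- The weight of a fractional vertex cover. -/
noncomputable def fvcWeight {V : Type} [Fintype V] (x : V → ℝ) : ℝ := ∑ v, x v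

/-- `LP(G)`: the minimum weight of a fractional vertex cover of `G`. -/
noncomputable def LPopt {V : Type} [Fintype V] (G : SimpleGraph V) : ℝ :=
  sInf {w : ℝ | ∃ x : V → ℝ, IsFVC G x ∧ w = fvcWeight x}

/-- A matching of `G`: a set of pairwise vertex-disjoint edges of `G`. -/
def IsMatchingSet {V : Type} (G : SimpleGraph V) (M : Finset (Sym2 V)) : Prop :=
  (∀ e ∈ M, e ∈ G.edgeSet) ∧ ∀ e ∈ M, ∀ f ∈ M, e ≠ f → ∀ v : V, v ∈ e → v ∉ f

/-- `MM(G)`: the maximum size of a matching of `G`. -/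
noncomputable def MMnum {V : Type} (G : SimpleGraph V) : ℕ :=
  sSup {n : ℕ | ∃ M : Finset (Sym2 V), IsMatchingSet G M ∧ M.card = n}

/-- `OPT(G)`: the minimum size of a vertex cover of `G`. -/
noncomputable def VCnum {V : Type} (G : SimpleGraph V) : ℕ :=
  sInf {n : ℕ | ∃ S : Finset V, (∀ ⦃u v⦄, G.Adj u v → u ∈ S ∨ v ∈ S) ∧ S.card = n}

/-- `N(X)`: the set of vertices outside `X` having a neighbour in `X`. -/
def nbhd {V : Type} (G : SimpleGraph V) (X : Set V) : Set V :=
  {v | v ∉ X ∧ ∃ u ∈ X, G.Adj u v}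

/-- `X` is an independent set in `G`. -/
def IndepSet {V : Type} (G : SimpleGraph V) (X : Set V) : Prop :=
  ∀ u ∈ X, ∀ v ∈ X, ¬ G.Adj u v

/-- `surplus(G) ≥ s`: every nonempty independent set `X` satisfies `|N(X)| ≥ |X| + s`. -/
def SurplusGE {V : Type} (G : SimpleGraph V) (s : ℕ) : Prop :=
  ∀ X : Set V, X.Nonempty → IndepSet G X → X.ncard + s ≤ (nbhd G X).ncard

/-- The matching `M` saturates the vertex `v`. -/
def Saturates {V : Type} (M : Finset (Sym2 V)) (v : V) : Prop := ∃ e ∈ M, v ∈ e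

/-- `O(G)`: vertices left unsaturated by some maximum matching of `G`. -/
def OSet {V : Type} (G : SimpleGraph V) : Set V :=
  {v | ∃ M : Finset (Sym2 V), IsMatchingSet G M ∧ M.card = MMnum G ∧ ¬ Saturates M v}

/-- `I(G)`: vertices outside `O(G)` having a neighbour in `O(G)`. -/
def ISet {V : Type} (G : SimpleGraph V) : Set V := nbhd G (OSet G)

/-- `P(G)`: the remaining vertices. -/
def GEPSet {V : Type} (G : SimpleGraph V) : Set V := (OSet G ∪ ISet G)ᶜ

/-- The struction graph obtained from `G` and `Z`: delete `Z`, identify `N(Z)`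
into a single new vertex `z` adjacent to exactly those remaining vertices that are
adjacent in `G` to some vertex of `N(Z)`. -/
def struction {V : Type} (G : SimpleGraph V) (Z : Set V) :
    SimpleGraph (((Z ∪ nbhd G Z)ᶜ : Set V) ⊕ Unit) where
  Adj a b :=
    match a, b with
    | Sum.inl u, Sum.inl v => G.Adj u.1 v.1
    | Sum.inl u, Sum.inr _ => ∃ w ∈ nbhd G Z, G.Adj w u.1
    | Sum.inr _, Sum.inl v => ∃ w ∈ nbhd G Z, G.Adj w v.1
    | Sum.inr _, Sum.inr _ => False
  symm := by
    constructor
    rintro (u | u) (v | v) h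
    · exact h.symm
    · exact h
    · exact h
    · exact h
  loopless := by
    constructor
    rintro (u | u) h
    · exact G.loopless.irrefl u.1 h
    · exact h


section Auxiliary

lemma mm_bddAbove {V : Type} [Fintype V] (G : SimpleGraph V) :
    BddAbove {n : ℕ | ∃ M : Finset (Sym2 V), IsMatchingSet G M ∧ M.card = n} := by
  refine ⟨Fintype.card (Sym2 V), ?_⟩
  rintro n ⟨M, _, rfl⟩
  exact Finset.card_le_univ M

lemma le_mm {V : Type} [Fintype V] (G : SimpleGraph V) {M : Finset (Sym2 V)}
    (h : IsMatchingSet G M) : M.card ≤ MMnum G :=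
  le_csSup (mm_bddAbove G) ⟨M, h, rfl⟩

lemma mm_exists {V : Type} [Fintype V] (G : SimpleGraph V) :
    ∃ M : Finset (Sym2 V), IsMatchingSet G M ∧ M.card = MMnum G := by
  have h0 : (0:ℕ) ∈ {n : ℕ | ∃ M : Finset (Sym2 V), IsMatchingSet G M ∧ M.card = n} :=
    ⟨∅, ⟨fun e he => absurd he (Finset.notMem_empty e),
        fun e he => absurd he (Finset.notMem_empty e)⟩, rfl⟩
  exact Nat.sSup_mem ⟨0, h0⟩ (mm_bddAbove G)

lemma matching_union {V : Type} {G : SimpleGraph V} {A B : Finset (Sym2 V)}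
    (hA : IsMatchingSet G A) (hB : IsMatchingSet G B)
    (hd : ∀ e ∈ A, ∀ f ∈ B, ∀ v, v ∈ e → v ∉ f) :
    IsMatchingSet G (A ∪ B) ∧ (A ∪ B).card = A.card + B.card := by
  have hAB : Disjoint A B := by
    rw [Finset.disjoint_left]
    intro e heA heB
    obtain ⟨⟨a, b⟩, rfl⟩ := Quot.exists_rep e
    exact hd _ heA _ heB a (Sym2.mem_mk_left a b) (Sym2.mem_mk_left a b)
  constructor
  · constructor
    · intro e he
      rcases Finset.mem_union.mp he with h | h
      · exact hA.1 e h
      · exact hB.1 e h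
    · intro e he f hf hef v hve hvf
      rcases Finset.mem_union.mp he with he | he <;> rcases Finset.mem_union.mp hf with hf | hf
      · exact hA.2 e he f hf hef v hve hvf
      · exact hd e he f hf v hve hvf
      · exact hd f hf e he v hvf hve
      · exact hB.2 e he f hf hef v hve hvf
  · exact Finset.card_union_of_disjoint hAB

lemma hall_exclude {V : Type} [Fintype V] (G : SimpleGraph V)
    (hsur : SurplusGE G 1) (Z : Set V) (hZind : IndepSet G Z) (w0 : V) :
    ∃ f : Z → V, Function.Injective f ∧
      ∀ z : Z, G.Adj z.1 (f z) ∧ f z ∈ nbhd G Z ∧ f z ≠ w0 := by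
  set t : Z → Finset V := fun z =>
    Finset.univ.filter (fun v => G.Adj z.1 v ∧ v ∈ nbhd G Z ∧ v ≠ w0) with ht
  have hall : ∀ s : Finset Z, s.card ≤ (s.biUnion t).card := by
    intro s
    rcases s.eq_empty_or_nonempty with rfl | hs
    · simp
    set X : Set V := Subtype.val '' (s : Set Z) with hX
    have hXZ : X ⊆ Z := by rintro v ⟨z, _, rfl⟩; exact z.2
    have hXne : X.Nonempty := by
      obtain ⟨z, hz⟩ := hs
      exact ⟨z.1, ⟨z, hz, rfl⟩⟩
    have hXind : IndepSet G X := fun u hu v hv => hZind u (hXZ hu) v (hXZ hv)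
    have hsub : nbhd G X ⊆ ↑(s.biUnion t) ∪ {w0} := by
      rintro v ⟨hvX, u, huX, huv⟩
      by_cases hvw : v = w0
      · exact Or.inr (by simp [hvw])
      left
      rcases huX with ⟨z, hz, rfl⟩
      have hvZ : v ∉ Z := fun hvZ => hZind z.1 z.2 v hvZ huv
      have hvN : v ∈ nbhd G Z := ⟨hvZ, z.1, z.2, huv⟩
      simp only [Finset.coe_biUnion, Set.mem_iUnion]
      exact ⟨z, hz, by simp [ht, huv, hvw, hvN]⟩
    have h1 := hsur X hXne hXind
    have h2 : (nbhd G X).ncard ≤ (s.biUnion t).card + 1 := by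
      calc (nbhd G X).ncard ≤ (↑(s.biUnion t) ∪ {w0} : Set V).ncard :=
            Set.ncard_le_ncard hsub (Set.toFinite _)
        _ ≤ (↑(s.biUnion t) : Set V).ncard + ({w0} : Set V).ncard :=
            Set.ncard_union_le _ _
        _ = (s.biUnion t).card + 1 := by
            rw [Set.ncard_coe_finset, Set.ncard_singleton]
    have h3 : X.ncard = s.card := by
      rw [hX, Set.ncard_image_of_injective _ Subtype.val_injective,
        Set.ncard_coe_finset]
    omega
  obtain ⟨f, hfinj, hft⟩ := (Finset.all_card_le_biUnion_card_iff_exists_injective t).mp hall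
  refine ⟨f, hfinj, fun z => ?_⟩
  have := hft z
  simp only [ht, Finset.mem_filter, Finset.mem_univ, true_and] at this
  exact this

lemma hall_matching {V : Type} [Fintype V] (G : SimpleGraph V)
    (hsur : SurplusGE G 1) (Z : Set V) (hZind : IndepSet G Z) (w0 : V) :
    ∃ Mh : Finset (Sym2 V),
      (∀ e ∈ Mh, e ∈ G.edgeSet) ∧
      (∀ e ∈ Mh, ∀ f ∈ Mh, e ≠ f → ∀ v : V, v ∈ e → v ∉ f) ∧
      Mh.card = Z.ncard ∧
      (∀ e ∈ Mh, ∀ v ∈ e, (v ∈ Z ∨ (v ∈ nbhd G Z ∧ v ≠ w0))) := by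
  obtain ⟨f, hfinj, hf⟩ := hall_exclude G hsur Z hZind w0
  set g : Z → Sym2 V := fun z => s(z.1, f z) with hg
  have hZN : ∀ v ∈ nbhd G Z, v ∉ Z := fun v hv => hv.1
  have hginj : Function.Injective g := by
    intro z z' h
    simp only [hg, Sym2.eq_iff] at h
    rcases h with ⟨h1, _⟩ | ⟨h1, h2⟩
    · exact Subtype.ext h1
    · exact absurd z.2 (by rw [h1]; exact hZN _ (hf z').2.1)
  refine ⟨Finset.univ.image g, ?_, ?_, ?_, ?_⟩
  · intro e he
    obtain ⟨z, _, rfl⟩ := Finset.mem_image.mp he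
    exact (hf z).1
  · intro e he e' he' hee' v hv hv'
    obtain ⟨z, _, rfl⟩ := Finset.mem_image.mp he
    obtain ⟨z', _, rfl⟩ := Finset.mem_image.mp he'
    simp only [hg, Sym2.mem_iff] at hv hv'
    have hzz' : z ≠ z' := fun h => hee' (by rw [h])
    rcases hv with rfl | rfl <;> rcases hv' with h | h
    · exact hzz' (Subtype.ext h)
    · exact hZN _ (by rw [h] at *; exact (hf z').2.1) z.2
    · exact hZN _ (hf z).2.1 (h ▸ z'.2)
    · exact hzz' (hfinj h)
  · rw [Finset.card_image_of_injective _ hginj, Finset.card_univ]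
    rw [Set.ncard_eq_toFinset_card', Set.toFinset_card]
  · intro e he v hv
    obtain ⟨z, _, rfl⟩ := Finset.mem_image.mp he
    simp only [hg, Sym2.mem_iff] at hv
    rcases hv with rfl | rfl
    · exact Or.inl z.2
    · exact Or.inr ⟨(hf z).2.1, (hf z).2.2⟩

lemma lift_matching {V : Type} [Fintype V] (G : SimpleGraph V) (Z : Set V) (v0 : V)
    (M1 : Finset (Sym2 (((Z ∪ nbhd G Z)ᶜ : Set V) ⊕ Unit)))
    (hM1 : IsMatchingSet (struction G Z) M1)
    (hnoz : ∀ e ∈ M1, (Sum.inr () : ((Z ∪ nbhd G Z)ᶜ : Set V) ⊕ Unit) ∉ e) :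
    ∃ Mi : Finset (Sym2 V),
      (∀ e ∈ Mi, e ∈ G.edgeSet) ∧
      (∀ e ∈ Mi, ∀ f ∈ Mi, e ≠ f → ∀ v : V, v ∈ e → v ∉ f) ∧
      Mi.card = M1.card ∧
      (∀ e' ∈ Mi, ∃ e ∈ M1, ∀ v : V, v ∈ e' →
        ∃ a : ((Z ∪ nbhd G Z)ᶜ : Set V), a.1 = v ∧ Sum.inl a ∈ e) := by
  have hshape : ∀ e ∈ M1, ∃ a b : ((Z ∪ nbhd G Z)ᶜ : Set V),
      e = s(Sum.inl a, Sum.inl b) ∧ G.Adj a.1 b.1 := by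
    intro e he
    obtain ⟨⟨x, y⟩, rfl⟩ := Quot.exists_rep e
    have hadj : (struction G Z).Adj x y := hM1.1 _ he
    match x, y with
    | Sum.inl a, Sum.inl b => exact ⟨a, b, rfl, hadj⟩
    | Sum.inl a, Sum.inr u =>
        cases u; exact absurd (Sym2.mem_mk_right _ _) (hnoz _ he)
    | Sum.inr u, Sum.inl b =>
        cases u; exact absurd (Sym2.mem_mk_left _ _) (hnoz _ he)
    | Sum.inr u, Sum.inr u' => exact hadj.elim
  set φ : (((Z ∪ nbhd G Z)ᶜ : Set V) ⊕ Unit) → V := Sum.elim Subtype.val (fun _ => v0) with hφ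
  have hinj : Set.InjOn (Sym2.map φ) M1 := by
    intro e he e' he' heq
    obtain ⟨a, b, rfl, _⟩ := hshape e he
    obtain ⟨a', b', rfl, _⟩ := hshape e' he'
    simp only [Sym2.map_pair_eq, hφ, Sum.elim_inl, Sym2.eq_iff] at heq
    rcases heq with ⟨h1, h2⟩ | ⟨h1, h2⟩
    · rw [Subtype.ext h1, Subtype.ext h2]
    · rw [Subtype.ext h1, Subtype.ext h2, Sym2.eq_swap]
  refine ⟨M1.image (Sym2.map φ), ?_, ?_, ?_, ?_⟩
  · intro e' he'
    obtain ⟨e, he, rfl⟩ := Finset.mem_image.mp he'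
    obtain ⟨a, b, rfl, hab⟩ := hshape e he
    simpa [Sym2.map_pair_eq, hφ] using hab
  · intro e' he' f' hf' hef v hve hvf
    obtain ⟨e, he, rfl⟩ := Finset.mem_image.mp he'
    obtain ⟨f, hf, rfl⟩ := Finset.mem_image.mp hf'
    have hef' : e ≠ f := fun h => hef (by rw [h])
    obtain ⟨a, b, rfl, _⟩ := hshape e he
    obtain ⟨a', b', rfl, _⟩ := hshape f hf
    simp only [Sym2.map_pair_eq, hφ, Sum.elim_inl, Sym2.mem_iff] at hve hvf
    have key : ∀ (c : ((Z ∪ nbhd G Z)ᶜ : Set V)),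
        Sum.inl c ∈ s(Sum.inl a, Sum.inl b) →
        Sum.inl c ∈ s(Sum.inl a', Sum.inl b') → False := fun c h1 h2 =>
      hM1.2 _ he _ hf hef' _ h1 h2
    rcases hve with rfl | rfl <;> rcases hvf with h | h
    · exact key a (Sym2.mem_mk_left _ _)
        (by rw [Sym2.mem_iff]; left; rw [Subtype.ext h])
    · exact key a (Sym2.mem_mk_left _ _)
        (by rw [Sym2.mem_iff]; right; rw [Subtype.ext h])
    · exact key b (Sym2.mem_mk_right _ _)
        (by rw [Sym2.mem_iff]; left; rw [Subtype.ext h])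
    · exact key b (Sym2.mem_mk_right _ _)
        (by rw [Sym2.mem_iff]; right; rw [Subtype.ext h])
  · exact Finset.card_image_of_injOn hinj
  · intro e' he'
    obtain ⟨e, he, rfl⟩ := Finset.mem_image.mp he'
    obtain ⟨a, b, rfl, _⟩ := hshape e he
    refine ⟨_, he, fun v hv => ?_⟩
    simp only [Sym2.map_pair_eq, hφ, Sum.elim_inl, Sym2.mem_iff] at hv
    rcases hv with rfl | rfl
    · exact ⟨a, rfl, Sym2.mem_mk_left _ _⟩
    · exact ⟨b, rfl, Sym2.mem_mk_right _ _⟩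

end Auxiliary

/-- Struction drops the matching number by at least `|Z|`. -/
theorem mm_struction_le {V : Type} [Fintype V] (G : SimpleGraph V)
    (hsur : SurplusGE G 1) (Z : Set V) (hZne : Z.Nonempty) (hZind : IndepSet G Z)
    (hZsur : (nbhd G Z).ncard = Z.ncard + 1) (hNind : IndepSet G (nbhd G Z)) :
    MMnum (struction G Z) + Z.ncard ≤ MMnum G := by
  obtain ⟨M, hM, hMcard⟩ := mm_exists (struction G Z)
  rw [← hMcard]
  obtain ⟨v0, hv0⟩ := hZne
  have hcomp : ∀ a : ((Z ∪ nbhd G Z)ᶜ : Set V), a.1 ∉ Z ∧ a.1 ∉ nbhd G Z := by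
    intro a
    have := a.2
    simp only [Set.mem_compl_iff, Set.mem_union, not_or] at this
    exact this
  by_cases hz : ∃ e ∈ M, (Sum.inr () : ((Z ∪ nbhd G Z)ᶜ : Set V) ⊕ Unit) ∈ e
  · obtain ⟨e0, he0M, he0z⟩ := hz
    have hu0 : ∃ u0 : ((Z ∪ nbhd G Z)ᶜ : Set V),
        Sum.inl u0 ∈ e0 ∧ ∃ w ∈ nbhd G Z, G.Adj w u0.1 := by
      obtain ⟨⟨x, y⟩, rfl⟩ := Quot.exists_rep e0
      have hadj : (struction G Z).Adj x y := hM.1 _ he0M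
      match x, y with
      | Sum.inl a, Sum.inl b =>
          exfalso
          rw [Sym2.mem_iff] at he0z
          rcases he0z with h | h <;> cases h
      | Sum.inl a, Sum.inr u => exact ⟨a, Sym2.mem_mk_left _ _, hadj⟩
      | Sum.inr u, Sum.inl b => exact ⟨b, Sym2.mem_mk_right _ _, hadj⟩
      | Sum.inr u, Sum.inr u' => exact hadj.elim
    obtain ⟨u0, hu0e, w, hwN, hwu0⟩ := hu0
    set M1 := M.erase e0 with hM1def
    have hM1sub : M1 ⊆ M := Finset.erase_subset _ _
    have hM1 : IsMatchingSet (struction G Z) M1 :=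
      ⟨fun e he => hM.1 e (hM1sub he),
        fun e he f hf => hM.2 e (hM1sub he) f (hM1sub hf)⟩
    have hnoz : ∀ e ∈ M1, (Sum.inr () : ((Z ∪ nbhd G Z)ᶜ : Set V) ⊕ Unit) ∉ e := by
      intro e he hmem
      exact hM.2 e (hM1sub he) e0 he0M (Finset.ne_of_mem_erase he) _ hmem he0z
    obtain ⟨Mi, hMi1, hMi2, hMicard, hMitr⟩ := lift_matching G Z v0 M1 hM1 hnoz
    obtain ⟨Mh, hMh1, hMh2, hMhcard, hMhv⟩ := hall_matching G hsur Z hZind w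
    have hwZ : w ∉ Z := hwN.1
    have hsingle : IsMatchingSet G {s(w, u0.1)} := by
      constructor
      · intro e he
        rw [Finset.mem_singleton] at he
        subst he
        exact hwu0
      · intro e he f hf hef
        rw [Finset.mem_singleton] at he hf
        exact absurd (he.trans hf.symm) hef
    have hBd : ∀ e ∈ ({s(w, u0.1)} : Finset (Sym2 V)), ∀ f ∈ Mh, ∀ v, v ∈ e → v ∉ f := by
      intro e he f hf v hv hvf
      rw [Finset.mem_singleton] at he
      subst he
      rw [Sym2.mem_iff] at hv
      rcases hMhv f hf v hvf with hvZ | ⟨hvN, hvw⟩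
      · rcases hv with rfl | rfl
        · exact hwZ hvZ
        · exact (hcomp u0).1 hvZ
      · rcases hv with rfl | rfl
        · exact hvw rfl
        · exact (hcomp u0).2 hvN
    obtain ⟨hB, hBcard⟩ := matching_union hsingle ⟨hMh1, hMh2⟩ hBd
    have hAd : ∀ e ∈ Mi, ∀ f ∈ ({s(w, u0.1)} : Finset (Sym2 V)) ∪ Mh,
        ∀ v, v ∈ e → v ∉ f := by
      intro e he f hf v hv hvf
      obtain ⟨e1, he1, htr⟩ := hMitr e he
      obtain ⟨a, rfl, hae1⟩ := htr v hv
      rcases Finset.mem_union.mp hf with hf | hf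
      · rw [Finset.mem_singleton] at hf
        subst hf
        rw [Sym2.mem_iff] at hvf
        rcases hvf with h | h
        · exact (hcomp a).2 (h ▸ hwN)
        · have : a = u0 := Subtype.ext h
          subst this
          exact hM.2 e1 (hM1sub he1) e0 he0M (Finset.ne_of_mem_erase he1) _ hae1 hu0e
      · rcases hMhv f hf _ hvf with h | h
        · exact (hcomp a).1 h
        · exact (hcomp a).2 h.1
    obtain ⟨hFinal, hFcard⟩ := matching_union ⟨hMi1, hMi2⟩ hB hAd
    have hle := le_mm G hFinal
    have hM1card : M1.card + 1 = M.card := Finset.card_erase_add_one he0M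
    rw [hFcard, hBcard, Finset.card_singleton, hMicard, hMhcard] at hle
    omega
  · push_neg at hz
    obtain ⟨Mi, hMi1, hMi2, hMicard, hMitr⟩ := lift_matching G Z v0 M hM hz
    obtain ⟨Mh, hMh1, hMh2, hMhcard, hMhv⟩ := hall_matching G hsur Z hZind v0
    have hAd : ∀ e ∈ Mi, ∀ f ∈ Mh, ∀ v, v ∈ e → v ∉ f := by
      intro e he f hf v hv hvf
      obtain ⟨e1, he1, htr⟩ := hMitr e he
      obtain ⟨a, rfl, _⟩ := htr v hv
      rcases hMhv f hf _ hvf with h | h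
      · exact (hcomp a).1 h
      · exact (hcomp a).2 h.1
    obtain ⟨hFinal, hFcard⟩ := matching_union ⟨hMi1, hMi2⟩ ⟨hMh1, hMh2⟩ hAd
    have hle := le_mm G hFinal
    rw [hFcard, hMicard, hMhcard] at hle
    exact hle
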